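/- Let F : ℝⁿ → ℝⁿ be Lipschitz continuous, let ψ₀ : ℝⁿ → ℝ be twice continuously differentiable, let a₁, a₂ > 0, and define ψ₁(x) := ⟨∇ψ₀(x), F(x)⟩ + a₁·ψ₀(x). Suppose ψ₁ is continuously differentiable and ⟨∇ψ₁(x), F(x)⟩ ≥ -a₂·ψ₁(x) for all x ∈ ℝⁿ. Then the set S⁰ ∩ S¹ = {x : ψ₀(x) ≥ 0} ∩ {x : ψ₁(x) ≥ 0} is forward invariant along ẋ = F(x): every solution with ψ₀(x(0)) ≥ 0 and ψ₁(x(0)) ≥ 0 satisfies ψ₀(x(t)) ≥ 0 and ψ₁(x(t)) ≥ 0 for all t ≥ 0. -/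

import Mathlib

lemma nonneg_of_deriv_ge_neg_mul (a : ℝ) (f f' : ℝ → ℝ)
    (hf : ∀ t ≥ (0 : ℝ), HasDerivAt f (f' t) t)
    (hge : ∀ t ≥ (0 : ℝ), f' t ≥ -a * f t)
    (h0 : f 0 ≥ 0) : ∀ t ≥ (0 : ℝ), f t ≥ 0 := by
  set u : ℝ → ℝ := fun t => f t * Real.exp (a * t) with hu
  have hud : ∀ t ≥ (0 : ℝ), HasDerivAt u ((f' t + a * f t) * Real.exp (a * t)) t := by
    intro t ht
    have h1 : HasDerivAt (fun t => Real.exp (a * t)) (a * Real.exp (a * t)) t := by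
      have := (Real.hasDerivAt_exp (a * t)).comp t ((hasDerivAt_id t).const_mul a)
      simpa [mul_comm, Function.comp_def] using this
    have := (hf t ht).fun_mul h1
    exact this.congr_deriv (by ring)
  have hmono : MonotoneOn u (Set.Ici (0 : ℝ)) := by
    apply monotoneOn_of_deriv_nonneg (convex_Ici 0)
    · intro t ht
      exact ((hud t ht).continuousAt).continuousWithinAt
    · intro t ht
      rw [interior_Ici] at ht
      exact ((hud t (le_of_lt ht)).differentiableAt).differentiableWithinAt
    · intro t ht
      rw [interior_Ici] at ht
      rw [(hud t (le_of_lt ht)).deriv]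
      have := hge t (le_of_lt ht)
      have : f' t + a * f t ≥ 0 := by linarith
      positivity
  intro t ht
  have h1 : u 0 ≤ u t := hmono Set.self_mem_Ici ht ht
  have h2 : (0 : ℝ) ≤ u 0 := by
    simp only [hu, mul_zero, Real.exp_zero, mul_one]
    exact h0
  have h3 : 0 ≤ f t * Real.exp (a * t) := le_trans h2 h1
  nlinarith [Real.exp_pos (a * t)]

/-- Closed-loop ODE form of the high-order CBF theorem (Theorem 2 of the paper) with linear
class-`K∞` rates: with `ψ₁ x := ⟨∇ψ₀ x, F x⟩ + a₁·ψ₀ x` continuously differentiable and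
`⟨∇ψ₁ x, F x⟩ ≥ -a₂·ψ₁ x` everywhere, the set `S⁰ ∩ S¹ = {ψ₀ ≥ 0} ∩ {ψ₁ ≥ 0}` is forward
invariant along `ẋ = F x`. -/
theorem hocbf_closed_loop_forward_invariant
    (n : ℕ) (F : EuclideanSpace ℝ (Fin n) → EuclideanSpace ℝ (Fin n))
    (K : NNReal) (hF : LipschitzWith K F)
    (ψ₀ : EuclideanSpace ℝ (Fin n) → ℝ) (hψ₀ : ContDiff ℝ 2 ψ₀)
    (a₁ a₂ : ℝ) (ha₁ : 0 < a₁) (ha₂ : 0 < a₂)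
    (ψ₁ : EuclideanSpace ℝ (Fin n) → ℝ)
    (hψ₁def : ∀ x, ψ₁ x = (inner ℝ (gradient ψ₀ x) (F x) : ℝ) + a₁ * ψ₀ x)
    (hψ₁smooth : ContDiff ℝ 1 ψ₁)
    (hcbf : ∀ x, (inner ℝ (gradient ψ₁ x) (F x) : ℝ) ≥ -a₂ * ψ₁ x)
    (x : ℝ → EuclideanSpace ℝ (Fin n))
    (hsol : ∀ t ≥ (0 : ℝ), HasDerivAt x (F (x t)) t)
    (hinit₀ : ψ₀ (x 0) ≥ 0) (hinit₁ : ψ₁ (x 0) ≥ 0) :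
    ∀ t ≥ (0 : ℝ), ψ₀ (x t) ≥ 0 ∧ ψ₁ (x t) ≥ 0 := by
  have hd0 : Differentiable ℝ ψ₀ := hψ₀.differentiable (by norm_num)
  have hd1 : Differentiable ℝ ψ₁ := hψ₁smooth.differentiable one_ne_zero
  -- chain rule
  have hchain : ∀ (ψ : EuclideanSpace ℝ (Fin n) → ℝ), Differentiable ℝ ψ →
      ∀ t ≥ (0 : ℝ), HasDerivAt (fun t => ψ (x t))
        ((inner ℝ (gradient ψ (x t)) (F (x t)) : ℝ)) t := by
    intro ψ hψ t ht
    have hg := (hψ (x t)).hasGradientAt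
    have hf := hg.hasFDerivAt
    have := hf.comp_hasDerivAt t (hsol t ht)
    simpa [Function.comp_def] using this
  have h1 : ∀ t ≥ (0 : ℝ), ψ₁ (x t) ≥ 0 := by
    apply nonneg_of_deriv_ge_neg_mul a₂ _ (fun t => (inner ℝ (gradient ψ₁ (x t)) (F (x t)) : ℝ))
      (hchain ψ₁ hd1) _ hinit₁
    intro t _
    exact hcbf (x t)
  have h0 : ∀ t ≥ (0 : ℝ), ψ₀ (x t) ≥ 0 := by
    apply nonneg_of_deriv_ge_neg_mul a₁ _ (fun t => (inner ℝ (gradient ψ₀ (x t)) (F (x t)) : ℝ))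
      (hchain ψ₀ hd0) _ hinit₀
    intro t ht
    have := h1 t ht
    have hdef := hψ₁def (x t)
    simp only [ge_iff_le]
    linarith
  exact fun t ht => ⟨h0 t ht, h1 t ht⟩
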